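/- Let λ_n > 0 be defined for integers n ≥ 3 by the equation (n+1)^{-λ_n} + (n-1)·n^{-λ_n} = 1. Then λ_n → 1 as n → ∞. -/

import Mathlib

open Real Filter

lemma aux_log_ratio : Tendsto (fun n : ℕ => Real.log ((n : ℝ) - 1) / Real.log n)
    atTop (nhds 1) := by
  have h1 : Tendsto (fun n : ℕ => Real.log (1 - 1 / (n : ℝ))) atTop (nhds 0) := by
    have hb : Tendsto (fun n : ℕ => 1 - 1 / (n : ℝ)) atTop (nhds 1) := by
      simpa using (tendsto_const_nhds : Tendsto (fun _ : ℕ => (1:ℝ)) atTop (nhds 1)).sub tendsto_one_div_atTop_nhds_zero_nat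
    have := ((Real.continuousAt_log (by norm_num : (1:ℝ) ≠ 0)).tendsto).comp hb
    simpa [Function.comp_def] using this
  have h2 : Tendsto (fun n : ℕ => (Real.log n)⁻¹) atTop (nhds 0) :=
    (Real.tendsto_log_atTop.comp tendsto_natCast_atTop_atTop).inv_tendsto_atTop
  have h3 : Tendsto (fun n : ℕ => 1 + Real.log (1 - 1 / (n : ℝ)) * (Real.log n)⁻¹)
      atTop (nhds 1) := by
    have := (h1.mul h2).const_add 1
    simpa using this
  refine h3.congr' ?_
  filter_upwards [eventually_ge_atTop 2] with n hn
  have hn1 : (1 : ℝ) < (n : ℝ) := by exact_mod_cast hn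
  have hlogn : Real.log n ≠ 0 := ne_of_gt (Real.log_pos hn1)
  have hln1 : Real.log (1 - 1 / (n : ℝ)) = Real.log ((n : ℝ) - 1) - Real.log n := by
    have : 1 - 1 / (n : ℝ) = ((n : ℝ) - 1) / n := by
      field_simp
    rw [this, Real.log_div (by linarith) (by linarith)]
  rw [hln1]
  field_simp
  ring

theorem stmt4 (l : ℕ → ℝ)
    (hpos : ∀ n : ℕ, 3 ≤ n → 0 < l n)
    (heq : ∀ n : ℕ, 3 ≤ n →
      ((n : ℝ) + 1) ^ (-(l n)) + ((n : ℝ) - 1) * (n : ℝ) ^ (-(l n)) = 1) :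
    Tendsto l atTop (nhds 1) := by
  apply tendsto_of_tendsto_of_tendsto_of_le_of_le' aux_log_ratio
    (tendsto_const_nhds : Tendsto (fun _ : ℕ => (1:ℝ)) atTop (nhds 1))
  · -- lower bound: log(n-1)/log n ≤ l n eventually
    filter_upwards [eventually_ge_atTop 3] with n hn
    have hn1 : (1 : ℝ) < (n : ℝ) := by
      have : (3:ℝ) ≤ n := by exact_mod_cast hn
      linarith
    have hlogn : 0 < Real.log n := Real.log_pos hn1
    have hl := hpos n hn
    have heqn := heq n hn
    have h1 : ((n : ℝ) + 1) ^ (-(l n)) > 0 := Real.rpow_pos_of_pos (by linarith) _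
    have h2 : ((n : ℝ) - 1) * (n : ℝ) ^ (-(l n)) < 1 := by linarith
    have hnpos : (0 : ℝ) < n := by linarith
    have hrw : (n : ℝ) ^ (-(l n)) = ((n : ℝ) ^ (l n))⁻¹ := by
      rw [Real.rpow_neg hnpos.le]
    have hpow : 0 < (n : ℝ) ^ (l n) := Real.rpow_pos_of_pos hnpos _
    have h3 : (n : ℝ) - 1 < (n : ℝ) ^ (l n) := by
      rw [hrw] at h2
      calc (n : ℝ) - 1 = ((n:ℝ) - 1) * ((n:ℝ)^(l n))⁻¹ * (n:ℝ)^(l n) := by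
            field_simp
        _ < 1 * (n:ℝ)^(l n) := by
            exact mul_lt_mul_of_pos_right h2 hpow
        _ = (n:ℝ)^(l n) := one_mul _
    have h4 : Real.log ((n : ℝ) - 1) ≤ l n * Real.log n := by
      calc Real.log ((n : ℝ) - 1) ≤ Real.log ((n : ℝ) ^ (l n)) :=
            Real.log_le_log (by linarith) h3.le
        _ = l n * Real.log n := Real.log_rpow hnpos _
    rw [div_le_iff₀ hlogn]
    linarith
  · -- upper bound: l n ≤ 1 eventually
    filter_upwards [eventually_ge_atTop 3] with n hn
    by_contra hlt
    push_neg at hlt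
    have hn3 : (3:ℝ) ≤ n := by exact_mod_cast hn
    have heqn := heq n hn
    have ha : (1:ℝ) ≤ (n : ℝ) + 1 := by linarith
    have hb : (1:ℝ) ≤ (n : ℝ) := by linarith
    have e1 : ((n : ℝ) + 1) ^ (-(l n)) ≤ ((n : ℝ) + 1) ^ (-1 : ℝ) :=
      Real.rpow_le_rpow_of_exponent_le ha (by linarith)
    have e2 : (n : ℝ) ^ (-(l n)) ≤ (n : ℝ) ^ (-1 : ℝ) :=
      Real.rpow_le_rpow_of_exponent_le hb (by linarith)
    have e3 : ((n : ℝ) - 1) * (n : ℝ) ^ (-(l n)) ≤ ((n : ℝ) - 1) * (n : ℝ) ^ (-1:ℝ) :=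
      mul_le_mul_of_nonneg_left e2 (by linarith)
    have key : (1:ℝ) ≤ ((n : ℝ) + 1)⁻¹ + ((n : ℝ) - 1) * (n : ℝ)⁻¹ := by
      rw [← Real.rpow_neg_one ((n:ℝ)+1), ← Real.rpow_neg_one (n:ℝ)]
      linarith
    have hn0 : (0:ℝ) < n := by linarith
    have h5 : ((n:ℝ)+1)⁻¹ < (n:ℝ)⁻¹ := by
      apply inv_strictAnti₀ hn0; linarith
    have h6 : ((n:ℝ)-1) * (n:ℝ)⁻¹ = 1 - (n:ℝ)⁻¹ := by field_simp
    have hfalse : ((n : ℝ) + 1)⁻¹ + ((n : ℝ) - 1) * (n : ℝ)⁻¹ < 1 := by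
      rw [h6]; linarith
    linarith
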